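/- Let F be a field, n ≥ p ≥ r > 0 be integers, and W be an optimal affine subspace of r×r matrices over F. Then W̃^(n,p) is an affine subspace of n×p matrices over F in which every element has rank exactly r, and its dimension equals r(r−1)/2 + r(n−r). -/

import Mathlib

/-- An affine subspace of s×s matrices is *optimal* if it is nonempty, all its
elements are invertible, and its dimension equals s(s-1)/2. -/
def IsOptimal {F : Type} [Field F] {s : ℕ}
    (W : AffineSubspace F (Matrix (Fin s) (Fin s) F)) : Prop :=
  (W : Set (Matrix (Fin s) (Fin s) F)).Nonempty ∧
    (∀ M ∈ W, IsUnit M) ∧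
    Module.finrank F W.direction = s * (s - 1) / 2

/-- Given a set W of r×r matrices and n ≥ p ≥ r, the set of n×p block matrices
[[W, 0], [B, 0]] with W ∈ W and B an arbitrary (n-r)×r matrix. -/
def tildeNP {F : Type} [Field F] {r n p : ℕ} (hrn : r ≤ n) (hrp : r ≤ p)
    (W : Set (Matrix (Fin r) (Fin r) F)) : Set (Matrix (Fin n) (Fin p) F) :=
  {M | (∀ (i : Fin n) (j : Fin p), r ≤ (j : ℕ) → M i j = 0) ∧
    (Matrix.of fun (i j : Fin r) => M (Fin.castLE hrn i) (Fin.castLE hrp j)) ∈ W}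

section Aux

variable {F : Type} [Field F]

/-- The top-left r×r block, as a linear map. -/
def topBlockL {n p r : ℕ} (hrn : r ≤ n) (hrp : r ≤ p) :
    Matrix (Fin n) (Fin p) F →ₗ[F] Matrix (Fin r) (Fin r) F where
  toFun M := Matrix.of fun i j => M (Fin.castLE hrn i) (Fin.castLE hrp j)
  map_add' := fun _ _ => rfl
  map_smul' := fun _ _ => rfl

/-- Matrices whose columns with index ≥ r vanish. -/
def zeroColsZ (F : Type) [Field F] (n p r : ℕ) : Submodule F (Matrix (Fin n) (Fin p) F) where
  carrier := {M | ∀ (i : Fin n) (j : Fin p), r ≤ (j : ℕ) → M i j = 0}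
  add_mem' := by
    intro a b ha hb i j hj
    simp [Matrix.add_apply, ha i j hj, hb i j hj]
  zero_mem' := fun i j hj => rfl
  smul_mem' := by
    intro c a ha i j hj
    simp [Matrix.smul_apply, ha i j hj]

/-- Assembling a block matrix [[A, 0], [B, 0]]. -/
def asmL {n p r : ℕ} (hrn : r ≤ n) (hrp : r ≤ p) :
    (Matrix (Fin r) (Fin r) F × Matrix (Fin (n - r)) (Fin r) F) →ₗ[F]
      Matrix (Fin n) (Fin p) F where
  toFun x := Matrix.of fun i j =>
    if hj : (j : ℕ) < r then
      (if hi : (i : ℕ) < r then x.1 ⟨i, hi⟩ ⟨j, hj⟩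
       else x.2 ⟨(i : ℕ) - r, by have := i.isLt; omega⟩ ⟨j, hj⟩)
    else 0
  map_add' := by
    intro a b
    funext i j
    by_cases hj : (j : ℕ) < r <;> by_cases hi : (i : ℕ) < r <;>
      simp [Matrix.add_apply, hj, hi]
  map_smul' := by
    intro c a
    funext i j
    by_cases hj : (j : ℕ) < r <;> by_cases hi : (i : ℕ) < r <;>
      simp [Matrix.smul_apply, hj, hi]

lemma topBlockL_asmL {n p r : ℕ} (hrn : r ≤ n) (hrp : r ≤ p)
    (x : Matrix (Fin r) (Fin r) F × Matrix (Fin (n - r)) (Fin r) F) :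
    topBlockL hrn hrp (asmL hrn hrp x) = x.1 := by
  funext i j
  have hi : ((Fin.castLE hrn i : Fin n) : ℕ) < r := by simp [i.isLt]
  have hj : ((Fin.castLE hrp j : Fin p) : ℕ) < r := by simp [j.isLt]
  erw [topBlockL, LinearMap.coe_mk, AddHom.coe_mk, Matrix.of_apply, asmL, LinearMap.coe_mk,
    AddHom.coe_mk]
  simp [hi, hj]

lemma asmL_zeroCols {n p r : ℕ} (hrn : r ≤ n) (hrp : r ≤ p)
    (x : Matrix (Fin r) (Fin r) F × Matrix (Fin (n - r)) (Fin r) F)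
    (i : Fin n) (j : Fin p) (hj : r ≤ (j : ℕ)) : asmL hrn hrp x i j = 0 := by
  exact dif_neg (Nat.not_lt.mpr hj)

/-- Summation over `Fin p` of a function vanishing above `r` reduces to `Fin r`. -/
lemma sum_castLE {p r : ℕ} (hrp : r ≤ p) (f : Fin p → F)
    (hf : ∀ j : Fin p, r ≤ (j : ℕ) → f j = 0) :
    ∑ j, f j = ∑ j : Fin r, f (Fin.castLE hrp j) := by
  have h1 : ∑ j : Fin r, f (Fin.castLE hrp j)
      = ∑ j ∈ Finset.univ.map (Fin.castLEEmb hrp), f j := by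
    rw [Finset.sum_map]; rfl
  rw [h1]
  refine (Finset.sum_subset (Finset.subset_univ _) ?_).symm
  intro x _ hx
  apply hf
  by_contra h
  push_neg at h
  exact hx (Finset.mem_map.mpr ⟨⟨(x : ℕ), h⟩, Finset.mem_univ _, Fin.ext rfl⟩)

lemma rank_of_topBlock_unit {n p r : ℕ} (hrn : r ≤ n) (hrp : r ≤ p)
    (M : Matrix (Fin n) (Fin p) F)
    (hz : ∀ (i : Fin n) (j : Fin p), r ≤ (j : ℕ) → M i j = 0)
    (hu : IsUnit (topBlockL hrn hrp M)) : M.rank = r := by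
  classical
  set w : Matrix (Fin r) (Fin r) F := topBlockL hrn hrp M with hw
  set K : (Fin p → F) →ₗ[F] (Fin r → F) := LinearMap.funLeft F F (Fin.castLE hrp) with hK
  set L : (Fin r → F) →ₗ[F] (Fin n → F) := (M.submatrix id (Fin.castLE hrp)).mulVecLin with hL
  have hcomp : M.mulVecLin = L.comp K := by
    ext v i
    simp only [Matrix.mulVecLin_apply, LinearMap.comp_apply, hL, hK,
      Matrix.mulVec, dotProduct, Matrix.submatrix_apply, id,
      LinearMap.funLeft_apply]
    exact sum_castLE hrp _ (fun j hj => by beta_reduce; rw [hz i j hj, zero_mul])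
  set proj : (Fin n → F) →ₗ[F] (Fin r → F) := LinearMap.funLeft F F (Fin.castLE hrn) with hproj
  have hcomp2 : proj.comp M.mulVecLin = w.mulVecLin.comp K := by
    ext v i
    simp only [Matrix.mulVecLin_apply, LinearMap.comp_apply, hproj, hK, hw,
      Matrix.mulVec, dotProduct, LinearMap.funLeft_apply, topBlockL,
      LinearMap.coe_mk, AddHom.coe_mk, Matrix.of_apply]
    exact sum_castLE hrp _ (fun j hj => by beta_reduce; rw [hz _ j hj, zero_mul])
  have hKsurj : Function.Surjective K :=
    LinearMap.funLeft_surjective_of_injective F F _ (Fin.castLE_injective hrp)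
  have hwsurj : Function.Surjective w.mulVecLin := by
    exact
      (Matrix.mulVec_surjective_iff_isUnit (A := w)).2 hu
  have hsurj : Function.Surjective (proj.comp M.mulVecLin) := by
    rw [hcomp2, LinearMap.coe_comp]
    exact hwsurj.comp hKsurj
  apply le_antisymm
  · rw [Matrix.rank, hcomp]
    calc Module.finrank F ↥(LinearMap.range (L.comp K))
        ≤ Module.finrank F ↥(LinearMap.range L) :=
          Submodule.finrank_mono (LinearMap.range_comp_le_range K L)
      _ ≤ Module.finrank F (Fin r → F) := LinearMap.finrank_range_le L
      _ = r := by simp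
  · have hmap : Submodule.map proj (LinearMap.range M.mulVecLin) = ⊤ := by
      rw [← LinearMap.range_comp, LinearMap.range_eq_top.mpr hsurj]
    calc (r : ℕ) = Module.finrank F (Fin r → F) := by simp
      _ = Module.finrank F (⊤ : Submodule F (Fin r → F)) := (finrank_top F _).symm
      _ = Module.finrank F ↥(Submodule.map proj (LinearMap.range M.mulVecLin)) := by
          rw [hmap]
      _ ≤ Module.finrank F ↥(LinearMap.range M.mulVecLin) :=
          Submodule.finrank_map_le proj _
      _ = M.rank := rfl

end Aux

/-- If W is an optimal affine subspace of r×r matrices over F and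
n ≥ p ≥ r > 0, then W̃^(n,p) is an affine subspace of n×p matrices in which
every element has rank exactly r, of dimension r(r-1)/2 + r(n-r). -/
theorem stmt_2 (F : Type) [Field F] (n p r : ℕ) (hrp : r ≤ p) (hpn : p ≤ n) (hr : 0 < r)
    (W : AffineSubspace F (Matrix (Fin r) (Fin r) F)) (hW : IsOptimal W) :
    ∃ S : AffineSubspace F (Matrix (Fin n) (Fin p) F),
      (S : Set (Matrix (Fin n) (Fin p) F))
          = tildeNP (le_trans hrp hpn) hrp (W : Set (Matrix (Fin r) (Fin r) F)) ∧
      (S : Set (Matrix (Fin n) (Fin p) F)).Nonempty ∧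
      (∀ M ∈ S, M.rank = r) ∧
      Module.finrank F S.direction = r * (r - 1) / 2 + r * (n - r) := by
  classical
  obtain ⟨hne, hunit, hdim⟩ := hW
  obtain ⟨w₀, hw₀⟩ := hne
  have hrn : r ≤ n := le_trans hrp hpn
  set V : Submodule F (Matrix (Fin n) (Fin p) F) :=
    zeroColsZ F n p r ⊓ Submodule.comap (topBlockL hrn hrp) W.direction with hV
  set v₀ : Matrix (Fin n) (Fin p) F := asmL hrn hrp (w₀, 0) with hv₀
  refine ⟨AffineSubspace.mk' v₀ V, ?_, ?_, ?_, ?_⟩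
  · -- set equality
    ext M
    rw [SetLike.mem_coe, AffineSubspace.mem_mk', vsub_eq_sub]
    rw [hV, Submodule.mem_inf, Submodule.mem_comap]
    have hz₀ : ∀ (i : Fin n) (j : Fin p), r ≤ (j : ℕ) → v₀ i j = 0 :=
      fun i j hj => asmL_zeroCols hrn hrp _ i j hj
    have htop₀ : topBlockL hrn hrp v₀ = w₀ := topBlockL_asmL hrn hrp _
    constructor
    · rintro ⟨hz, htop⟩
      constructor
      · intro i j hj
        have := hz i j hj
        have h0 := hz₀ i j hj
        simp only [Matrix.sub_apply] at this
        linear_combination (norm := ring_nf) this + h0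
      · rw [map_sub, htop₀] at htop
        have := (AffineSubspace.vsub_right_mem_direction_iff_mem hw₀
          (topBlockL hrn hrp M)).mp (by rwa [vsub_eq_sub])
        exact this
    · rintro ⟨hz, htop⟩
      constructor
      · intro i j hj
        simp [Matrix.sub_apply, hz i j hj, hz₀ i j hj]
      · rw [map_sub, htop₀]
        rw [show (topBlockL hrn hrp M - w₀ : Matrix (Fin r) (Fin r) F)
            = topBlockL hrn hrp M -ᵥ w₀ from rfl]
        exact (AffineSubspace.vsub_right_mem_direction_iff_mem hw₀ _).mpr htop
  · exact ⟨v₀, AffineSubspace.self_mem_mk' _ _⟩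
  · -- rank
    intro M hM
    rw [AffineSubspace.mem_mk', vsub_eq_sub, hV, Submodule.mem_inf,
      Submodule.mem_comap] at hM
    obtain ⟨hz, htop⟩ := hM
    have hz₀ : ∀ (i : Fin n) (j : Fin p), r ≤ (j : ℕ) → v₀ i j = 0 :=
      fun i j hj => asmL_zeroCols hrn hrp _ i j hj
    have htop₀ : topBlockL hrn hrp v₀ = w₀ := topBlockL_asmL hrn hrp _
    have hzM : ∀ (i : Fin n) (j : Fin p), r ≤ (j : ℕ) → M i j = 0 := by
      intro i j hj
      have := hz i j hj
      simp only [Matrix.sub_apply, hz₀ i j hj, sub_zero] at this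
      exact this
    have htopM : topBlockL hrn hrp M ∈ W := by
      rw [map_sub, htop₀] at htop
      exact (AffineSubspace.vsub_right_mem_direction_iff_mem hw₀ _).mp
        (by rwa [vsub_eq_sub])
    exact rank_of_topBlock_unit hrn hrp M hzM (hunit _ htopM)
  · -- dimension
    rw [AffineSubspace.direction_mk']
    -- V is the range of an injective linear map from W.direction × bottom blocks
    set Ψ : (↥W.direction × Matrix (Fin (n - r)) (Fin r) F) →ₗ[F]
        Matrix (Fin n) (Fin p) F :=
      (asmL hrn hrp).comp (LinearMap.prodMap W.direction.subtype LinearMap.id) with hΨ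
    have hinj : Function.Injective Ψ := by
      intro x y hxy
      have h1 : topBlockL hrn hrp (Ψ x) = topBlockL hrn hrp (Ψ y) := by rw [hxy]
      rw [hΨ] at h1
      simp only [LinearMap.comp_apply, topBlockL_asmL, LinearMap.prodMap_apply,
        Submodule.coe_subtype, LinearMap.id_coe, id] at h1
      have hfst : x.1 = y.1 := Subtype.ext h1
      have hsnd : x.2 = y.2 := by
        funext i j
        have h2 := congrFun (congrFun hxy ⟨r + (i : ℕ), by have := i.isLt; omega⟩)
          (Fin.castLE hrp j)
        have hjlt : ((Fin.castLE hrp j : Fin p) : ℕ) < r := by simp [j.isLt]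
        have hige : ¬ ((⟨r + (i : ℕ), by have := i.isLt; omega⟩ : Fin n) : ℕ) < r := by
          simp
        simp only [hΨ, LinearMap.comp_apply, LinearMap.prodMap_apply, asmL,
          LinearMap.coe_mk, AddHom.coe_mk, Matrix.of_apply, hjlt, hige,
          dif_pos, dif_neg, not_false_iff, LinearMap.id_coe, id] at h2
        erw [LinearMap.coe_mk, AddHom.coe_mk] at h2
        simp only [Matrix.of_apply, hjlt, hige, dif_pos, dif_neg, not_false_iff] at h2
        convert h2 using 2 <;> exact (Fin.ext (by simp)).symm
      exact Prod.ext hfst hsnd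
    have hrange : LinearMap.range Ψ = V := by
      apply le_antisymm
      · rintro _ ⟨x, rfl⟩
        rw [hV, Submodule.mem_inf, Submodule.mem_comap]
        constructor
        · intro i j hj
          exact asmL_zeroCols hrn hrp _ i j hj
        · rw [hΨ]
          simp only [LinearMap.comp_apply, topBlockL_asmL, LinearMap.prodMap_apply,
            Submodule.coe_subtype]
          exact x.1.2
      · intro M hM
        rw [hV, Submodule.mem_inf, Submodule.mem_comap] at hM
        obtain ⟨hz, htop⟩ := hM
        refine ⟨(⟨topBlockL hrn hrp M, htop⟩,
          Matrix.of fun i j => M ⟨r + (i : ℕ), by have := i.isLt; omega⟩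
            (Fin.castLE hrp j)), ?_⟩
        rw [hΨ]
        funext i j
        simp only [LinearMap.comp_apply, LinearMap.prodMap_apply, Submodule.coe_subtype,
          LinearMap.id_coe, id, asmL, LinearMap.coe_mk, AddHom.coe_mk, Matrix.of_apply]
        erw [LinearMap.coe_mk, AddHom.coe_mk, Matrix.of_apply]
        by_cases hj : (j : ℕ) < r
        · by_cases hi : (i : ℕ) < r
          · rw [dif_pos hj, dif_pos hi]
            show M (Fin.castLE hrn ⟨(i : ℕ), hi⟩) (Fin.castLE hrp ⟨(j : ℕ), hj⟩) = M i j
            congr 1 <;> exact Fin.ext rfl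
          · rw [dif_pos hj, dif_neg hi]
            show M _ (Fin.castLE hrp ⟨(j : ℕ), hj⟩) = M i j
            congr 1 <;> exact Fin.ext (by simp; omega)
        · rw [dif_neg hj]
          exact (hz i j (Nat.le_of_not_lt hj)).symm
    have := (LinearEquiv.ofInjective Ψ hinj).finrank_eq
    rw [hrange] at this
    rw [← this, Module.finrank_prod, hdim]
    have : Module.finrank F (Matrix (Fin (n - r)) (Fin r) F) = (n - r) * r := by
      rw [Module.finrank_matrix]
      simp
    rw [this, Nat.mul_comm (n - r) r]
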